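/- Let m ≥ 2 and for ξ ∈ ℝ and v ∈ ℝ^{m−1} define the m×m matrix M(ξ,v) = (1/2)[[1, vᵀ],[v, (1+ξ)I_{m−1} − ξ v vᵀ]]. Let w = (w₀, w̄) ∈ ℝ × ℝ^{m−1} with w̄ ≠ 0, and let u = (u₀, ū) ∈ ℝ × ℝ^{m−1} satisfy w̄ᵀū = ‖w̄‖ u₀. Then uᵀ M(−w₀/‖w̄‖, −w̄/‖w̄‖) u = −(1/2)(1 − w₀/‖w̄‖)(u₀² − ‖ū‖²). -/

import Mathlib

/-!
STATEMENT 17: The quadratic form of `M(−w₀/‖w̄‖, −w̄/‖w̄‖)` on vectors `u`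
satisfying `w̄ᵀū = ‖w̄‖u₀` equals `−(1/2)(1 − w₀/‖w̄‖)(u₀² − ‖ū‖²)`.
-/

open Filter Topology Set Matrix
open scoped InnerProductSpace

/-- The matrix `M(ξ, v) = (1/2) [[1, vᵀ], [v, (1+ξ) I − ξ v vᵀ]]`. -/
noncomputable def socMmat (d : ℕ) (ξ : ℝ) (v : EuclideanSpace ℝ (Fin d)) :
    Matrix (Fin (d + 1)) (Fin (d + 1)) ℝ :=
  Matrix.of fun i j =>
    (1 / 2) * (Fin.cases (Fin.cases 1 (fun j' => v j') j)
      (fun i' => Fin.cases (v i')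
        (fun j' => ((1 + ξ) * (if i' = j' then 1 else 0) - ξ * v i' * v j')) j) i)

theorem stmt_17 {d : ℕ} (hd : 1 ≤ d)
    (w₀ : ℝ) (wbar : EuclideanSpace ℝ (Fin d)) (hwbar : wbar ≠ 0)
    (u₀ : ℝ) (ubar : EuclideanSpace ℝ (Fin d))
    (hu : ⟪wbar, ubar⟫_ℝ = ‖wbar‖ * u₀) :
    (Fin.cons u₀ (fun j => ubar j) : Fin (d + 1) → ℝ) ⬝ᵥ
        (socMmat d (-(w₀ / ‖wbar‖)) (-(‖wbar‖⁻¹ • wbar))).mulVec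
          (Fin.cons u₀ fun j => ubar j)
      = -(1 / 2) * (1 - w₀ / ‖wbar‖) * (u₀ ^ 2 - ‖ubar‖ ^ 2) := by
  have hn : ‖wbar‖ ≠ 0 := norm_ne_zero_iff.mpr hwbar
  have hS1 : ∑ j, wbar j * ubar j = ‖wbar‖ * u₀ := by
    rw [← hu]; simp [PiLp.inner_apply, RCLike.inner_apply]; exact Finset.sum_congr rfl fun _ _ => mul_comm _ _
  have hS2 : ∑ j, ubar j * ubar j = ‖ubar‖ ^ 2 := by
    rw [EuclideanSpace.norm_sq_eq]; exact Finset.sum_congr rfl fun _ _ => by rw [Real.norm_eq_abs, sq_abs, sq]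
  simp only [socMmat, dotProduct, mulVec, Fin.sum_univ_succ, Fin.cons_zero, Fin.cons_succ,
    Matrix.of_apply, Fin.cases_zero, Fin.cases_succ, PiLp.smul_apply, PiLp.neg_apply,
    smul_eq_mul]
  have e1 : ∑ x, (1:ℝ) / 2 * -(‖wbar‖⁻¹ * wbar x) * ubar x = -(1/2) * u₀ := by
    calc ∑ x, (1:ℝ) / 2 * -(‖wbar‖⁻¹ * wbar x) * ubar x
        = ∑ x, (-(1/2) * ‖wbar‖⁻¹) * (wbar x * ubar x) :=
          Finset.sum_congr rfl fun x _ => by ring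
      _ = (-(1/2) * ‖wbar‖⁻¹) * (‖wbar‖ * u₀) := by rw [← Finset.mul_sum, hS1]
      _ = -(1/2) * u₀ := by field_simp
  have e2 : ∀ x : Fin d,
      (∑ x_1, 1 / 2 * (((1 + -(w₀ / ‖wbar‖)) * if x = x_1 then 1 else 0) -
          -(w₀ / ‖wbar‖) * -(‖wbar‖⁻¹ * wbar x) * -(‖wbar‖⁻¹ * wbar x_1)) * ubar x_1)
        = 1 / 2 * (1 + -(w₀ / ‖wbar‖)) * ubar x
          + (1 / 2 * (w₀ / ‖wbar‖) * ‖wbar‖⁻¹ * wbar x * ‖wbar‖⁻¹) * (‖wbar‖ * u₀) := by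
    intro x
    calc (∑ x_1, 1 / 2 * (((1 + -(w₀ / ‖wbar‖)) * if x = x_1 then 1 else 0) -
          -(w₀ / ‖wbar‖) * -(‖wbar‖⁻¹ * wbar x) * -(‖wbar‖⁻¹ * wbar x_1)) * ubar x_1)
        = ∑ x_1, ((if x = x_1 then (1:ℝ)/2 * (1 + -(w₀ / ‖wbar‖)) * ubar x_1 else 0)
            + (1 / 2 * (w₀ / ‖wbar‖) * ‖wbar‖⁻¹ * wbar x * ‖wbar‖⁻¹) * (wbar x_1 * ubar x_1)) :=
          Finset.sum_congr rfl fun x1 _ => by split <;> ring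
      _ = _ := by
          rw [Finset.sum_add_distrib, ← Finset.mul_sum, hS1, Finset.sum_ite_eq,
            if_pos (Finset.mem_univ x)]
  simp only [e2]
  have e3 : ∑ x, ubar x * (1 / 2 * -(‖wbar‖⁻¹ * wbar x) * u₀
        + (1 / 2 * (1 + -(w₀ / ‖wbar‖)) * ubar x
          + (1 / 2 * (w₀ / ‖wbar‖) * ‖wbar‖⁻¹ * wbar x * ‖wbar‖⁻¹) * (‖wbar‖ * u₀)))
      = (-(1/2) * ‖wbar‖⁻¹ * u₀ + 1 / 2 * (w₀ / ‖wbar‖) * ‖wbar‖⁻¹ * ‖wbar‖⁻¹ * ‖wbar‖ * u₀)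
          * (‖wbar‖ * u₀) + 1 / 2 * (1 + -(w₀ / ‖wbar‖)) * ‖ubar‖ ^ 2 := by
    calc ∑ x, ubar x * (1 / 2 * -(‖wbar‖⁻¹ * wbar x) * u₀
        + (1 / 2 * (1 + -(w₀ / ‖wbar‖)) * ubar x
          + (1 / 2 * (w₀ / ‖wbar‖) * ‖wbar‖⁻¹ * wbar x * ‖wbar‖⁻¹) * (‖wbar‖ * u₀)))
        = ∑ x, ((-(1/2) * ‖wbar‖⁻¹ * u₀ + 1 / 2 * (w₀ / ‖wbar‖) * ‖wbar‖⁻¹ * ‖wbar‖⁻¹ * ‖wbar‖ * u₀)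
            * (wbar x * ubar x) + (1 / 2 * (1 + -(w₀ / ‖wbar‖))) * (ubar x * ubar x)) :=
          Finset.sum_congr rfl fun x _ => by ring
      _ = _ := by rw [Finset.sum_add_distrib, ← Finset.mul_sum, ← Finset.mul_sum, hS1, hS2]
  rw [e1, e3]
  field_simp
  ring
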